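/- Let α ∈ (0,2] and c > 0. Then the derivative G_{α,c}'(x) tends to 0 as x tends to π from the left: lim_{x→π⁻} G_{α,c}'(x) = 0. -/

import Mathlib

open Filter Set

namespace GreenAux

noncomputable def aa (α c : ℝ) (n : ℕ) : ℝ := (c + (n : ℝ) ^ α)⁻¹
noncomputable def dd (α c : ℝ) (n : ℕ) : ℝ := aa α c n - 2 * aa α c (n+1) + aa α c (n+2)

variable {α c : ℝ}

noncomputable def f0 (α c : ℝ) (t : ℝ) : ℝ := (c + t ^ α)⁻¹
noncomputable def f1 (α c : ℝ) (t : ℝ) : ℝ := -(α * t ^ (α-1)) / (c + t ^ α) ^ 2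
noncomputable def f2 (α c : ℝ) (t : ℝ) : ℝ :=
  (-(α * ((α-1) * t ^ (α-1-1)))) * ((c + t ^ α) ^ 2)⁻¹
    + (-(α * t ^ (α-1))) * (-(2 * (c + t ^ α) ^ 1 * (α * t ^ (α-1))) / ((c + t ^ α) ^ 2) ^ 2)

lemma pos_base (hα : 0 < α) (hc : 0 < c) {t : ℝ} (ht : 0 < t) : 0 < c + t ^ α :=
  add_pos hc (Real.rpow_pos_of_pos ht α)

lemma hasDerivAt_f0 (hα : 0 < α) (hc : 0 < c) {t : ℝ} (ht : 0 < t) :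
    HasDerivAt (f0 α c) (f1 α c t) t := by
  have hb : HasDerivAt (fun t : ℝ => c + t ^ α) (α * t ^ (α-1)) t :=
    (Real.hasDerivAt_rpow_const (Or.inl ht.ne')).const_add c
  have := hb.inv (pos_base hα hc ht).ne'
  simpa [f0, f1, neg_div] using (show HasDerivAt (f0 α c) _ t from this)

lemma hasDerivAt_f1 (hα : 0 < α) (hc : 0 < c) {t : ℝ} (ht : 0 < t) :
    HasDerivAt (f1 α c) (f2 α c t) t := by
  have hb : HasDerivAt (fun t : ℝ => c + t ^ α) (α * t ^ (α-1)) t :=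
    (Real.hasDerivAt_rpow_const (Or.inl ht.ne')).const_add c
  have h1 : HasDerivAt (fun t : ℝ => -(α * t ^ (α-1))) (-(α * ((α-1) * t ^ (α-1-1)))) t := by
    exact ((Real.hasDerivAt_rpow_const (Or.inl ht.ne')).const_mul α).neg
  have h2 : HasDerivAt (fun t : ℝ => ((c + t ^ α) ^ 2)⁻¹)
      (-(2 * (c + t ^ α) ^ 1 * (α * t ^ (α-1))) / ((c + t ^ α) ^ 2) ^ 2) t := by
    exact (hb.pow 2).inv (pow_ne_zero 2 (pos_base hα hc ht).ne')
  have := h1.mul h2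
  have heq : f1 α c = fun t : ℝ => (-(α * t ^ (α-1))) * ((c + t ^ α) ^ 2)⁻¹ := by
    funext t; simp [f1, div_eq_mul_inv, neg_div]
  rw [heq]
  simpa [f2, mul_comm, mul_assoc, mul_left_comm, add_comm] using
    (show HasDerivAt (fun t : ℝ => (-(α * t ^ (α-1))) * ((c + t ^ α) ^ 2)⁻¹) _ t from this)

lemma f2_bound (hα : 0 < α) (hc : 0 < c) {t : ℝ} (ht : 1 ≤ t) :
    |f2 α c t| ≤ (α * |α-1| + 2 * α^2) * (t ^ (α+2))⁻¹ := by
  have ht0 : 0 < t := lt_of_lt_of_le one_pos ht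
  have hP : 0 < t ^ α := Real.rpow_pos_of_pos ht0 α
  have hQ : 0 < c + t ^ α := pos_base hα hc ht0
  have hT : 0 < t ^ (α+2) := Real.rpow_pos_of_pos ht0 _
  have hPQ : t ^ α ≤ c + t ^ α := by linarith
  have key1 : t ^ (α-1-1) * t ^ (α+2) = (t ^ α) ^ 2 := by
    rw [← Real.rpow_add ht0, ← Real.rpow_natCast (t ^ α) 2, ← Real.rpow_mul ht0.le]
    ring_nf
  have key2 : (t ^ (α-1)) ^ 2 * t ^ (α+2) = (t ^ α) ^ 3 := by
    rw [← Real.rpow_natCast (t ^ (α-1)) 2, ← Real.rpow_mul ht0.le,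
      ← Real.rpow_add ht0, ← Real.rpow_natCast (t ^ α) 3, ← Real.rpow_mul ht0.le]
    ring_nf
  have e1 : t ^ (α-1-1) * ((c + t ^ α) ^ 2)⁻¹ ≤ (t ^ (α+2))⁻¹ := by
    rw [← div_eq_mul_inv, ← one_div (t ^ (α+2)), div_le_div_iff₀ (by positivity) hT, key1]
    nlinarith [pow_le_pow_left₀ hP.le hPQ 2]
  have e2 : (t ^ (α-1)) ^ 2 * ((c + t ^ α) * (((c + t ^ α) ^ 2) ^ 2)⁻¹) ≤ (t ^ (α+2))⁻¹ := by
    rw [← mul_assoc, ← div_eq_mul_inv, ← one_div (t ^ (α+2)),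
      div_le_div_iff₀ (by positivity) hT]
    have h4 : (t ^ (α-1)) ^ 2 * (c + t ^ α) * (t ^ (α+2)) = (t ^ α) ^ 3 * (c + t ^ α) := by
      rw [← key2]; ring
    rw [h4]
    have h3 : (t ^ α) ^ 3 ≤ (c + t ^ α) ^ 3 := pow_le_pow_left₀ hP.le hPQ 3
    nlinarith
  have habs1 : |(-(α * ((α-1) * t ^ (α-1-1)))) * ((c + t ^ α) ^ 2)⁻¹|
      = (α * |α-1|) * (t ^ (α-1-1) * ((c + t ^ α) ^ 2)⁻¹) := by
    rw [abs_mul, abs_neg, abs_mul, abs_mul, abs_of_pos hα,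
      abs_of_pos (Real.rpow_pos_of_pos ht0 _), abs_of_pos (by positivity : (0:ℝ) < ((c + t ^ α) ^ 2)⁻¹)]
    ring
  have hterm2 : (-(α * t ^ (α-1))) * (-(2 * (c + t ^ α) ^ 1 * (α * t ^ (α-1))) / ((c + t ^ α) ^ 2) ^ 2)
      = (2 * α^2) * ((t ^ (α-1)) ^ 2 * ((c + t ^ α) * (((c + t ^ α) ^ 2) ^ 2)⁻¹)) := by
    rw [div_eq_mul_inv]; ring
  calc |f2 α c t| ≤ |(-(α * ((α-1) * t ^ (α-1-1)))) * ((c + t ^ α) ^ 2)⁻¹|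
        + |(-(α * t ^ (α-1))) * (-(2 * (c + t ^ α) ^ 1 * (α * t ^ (α-1))) / ((c + t ^ α) ^ 2) ^ 2)| :=
      abs_add_le _ _
    _ ≤ (α * |α-1|) * (t ^ (α+2))⁻¹ + (2 * α^2) * (t ^ (α+2))⁻¹ := by
      apply add_le_add
      · rw [habs1]
        exact mul_le_mul_of_nonneg_left e1 (by positivity)
      · rw [hterm2, abs_of_nonneg (by positivity)]
        exact mul_le_mul_of_nonneg_left e2 (by positivity)
    _ = (α * |α-1| + 2 * α^2) * (t ^ (α+2))⁻¹ := by ring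

lemma dd_eq_f2 (hα : 0 < α) (hc : 0 < c) {k : ℕ} (hk : 1 ≤ k) :
    ∃ η : ℝ, (k:ℝ) ≤ η ∧ dd α c k = f2 α c η := by
  have hk1 : (1:ℝ) ≤ (k:ℝ) := by exact_mod_cast hk
  have hkpos : (0:ℝ) < (k:ℝ) := by linarith
  -- g t = f0 t - f0 (t+1)
  set g : ℝ → ℝ := fun t => f0 α c t - f0 α c (t+1) with hg
  have hgd : ∀ t : ℝ, 0 < t → HasDerivAt g (f1 α c t - f1 α c (t+1)) t := by
    intro t ht
    have h2 : HasDerivAt (fun t : ℝ => f0 α c (t+1)) (f1 α c (t+1)) t := by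
      exact HasDerivAt.comp_add_const t 1
        (hasDerivAt_f0 hα hc (show (0:ℝ) < t+1 by linarith))
    exact (hasDerivAt_f0 hα hc ht).sub h2
  -- first MVT
  obtain ⟨ξ, hξ, hξeq⟩ := exists_hasDerivAt_eq_slope g (fun t => f1 α c t - f1 α c (t+1))
    (show (k:ℝ) < (k:ℝ)+1 by linarith)
    (fun t ht => ((hgd t (by simp at ht; linarith [ht.1])).continuousAt).continuousWithinAt)
    (fun t ht => hgd t (by linarith [ht.1]))
  -- second MVT
  have hξ0 : (0:ℝ) < ξ := by linarith [hξ.1]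
  obtain ⟨η, hη, hηeq⟩ := exists_hasDerivAt_eq_slope (f1 α c) (f2 α c)
    (show ξ < ξ+1 by linarith)
    (fun t ht => ((hasDerivAt_f1 hα hc (by simp at ht; linarith [ht.1])).continuousAt).continuousWithinAt)
    (fun t ht => hasDerivAt_f1 hα hc (by linarith [ht.1]))
  refine ⟨η, by linarith [hη.1, hξ.1], ?_⟩
  have h1 : dd α c k = g (k:ℝ) - g ((k:ℝ)+1) := by
    simp only [hg, dd, aa, f0]
    push_cast
    ring_nf
  have h2 : g ((k:ℝ)+1) - g (k:ℝ) = f1 α c ξ - f1 α c (ξ+1) := by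
    have := hξeq
    field_simp at this
    linarith [this]
  have h3 : f2 α c η = f1 α c (ξ+1) - f1 α c ξ := by
    have := hηeq
    field_simp at this
    linarith [this]
  rw [h1, h3]
  linarith [h2]



lemma dd_bound' (hα : 0 < α) (hc : 0 < c) (k : ℕ) :
    |dd α c (k+1)| ≤ (α * |α-1| + 2 * α^2) * (((k:ℝ)+1) ^ (α+2))⁻¹ := by
  obtain ⟨η, hη1, hη2⟩ := dd_eq_f2 hα hc (k := k+1) (by omega)
  have hcast : ((k+1 : ℕ) : ℝ) = (k:ℝ)+1 := by push_cast; ring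
  rw [hcast] at hη1
  have hk1 : (1:ℝ) ≤ (k:ℝ)+1 := by linarith [Nat.cast_nonneg (α := ℝ) k]
  have hη3 : (1:ℝ) ≤ η := le_trans hk1 hη1
  have h1 : |f2 α c η| ≤ (α * |α-1| + 2 * α^2) * (η ^ (α+2))⁻¹ := f2_bound hα hc hη3
  have h2 : (η ^ (α+2))⁻¹ ≤ (((k:ℝ)+1) ^ (α+2))⁻¹ := by
    apply inv_anti₀ (Real.rpow_pos_of_pos (by linarith) _)
    exact Real.rpow_le_rpow (by linarith) hη1 (by linarith)
  rw [hη2]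
  calc |f2 α c η| ≤ (α * |α-1| + 2 * α^2) * (η ^ (α+2))⁻¹ := h1
    _ ≤ (α * |α-1| + 2 * α^2) * (((k:ℝ)+1) ^ (α+2))⁻¹ :=
      mul_le_mul_of_nonneg_left h2 (by positivity)

lemma summable_main (hα : 0 < α) (hc : 0 < c) :
    Summable (fun k : ℕ => ((k:ℝ)+3) * |dd α c (k+1)|) := by
  set C := α * |α-1| + 2 * α^2 with hC
  have hC0 : 0 ≤ C := by positivity
  have hsum : Summable (fun k : ℕ => 3 * C * (((k:ℝ)+1) ^ (α+1))⁻¹) := by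
    apply Summable.mul_left
    have h0 : Summable (fun n : ℕ => 1 / (n:ℝ) ^ (α+1)) :=
      Real.summable_one_div_nat_rpow.mpr (by linarith)
    have h1 := (summable_nat_add_iff 1).mpr h0
    apply h1.congr
    intro k
    push_cast
    rw [one_div]
  apply Summable.of_nonneg_of_le (fun k => by positivity) _ hsum
  intro k
  have hk1 : (0:ℝ) < (k:ℝ)+1 := by positivity
  have hb := dd_bound' hα hc (c := c) k
  have hsplit : (((k:ℝ)+1) ^ (α+2))⁻¹ = (((k:ℝ)+1) ^ (α+1))⁻¹ * (((k:ℝ)+1))⁻¹ := by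
    rw [← mul_inv]
    congr 1
    have h := Real.rpow_add hk1 (α+1) 1
    rw [Real.rpow_one] at h
    rw [show α+2 = α+1+1 by ring, h]
  calc ((k:ℝ)+3) * |dd α c (k+1)| ≤ ((k:ℝ)+3) * (C * (((k:ℝ)+1) ^ (α+2))⁻¹) :=
      mul_le_mul_of_nonneg_left hb (by positivity)
    _ = C * (((k:ℝ)+3) * (((k:ℝ)+1))⁻¹) * (((k:ℝ)+1) ^ (α+1))⁻¹ := by
      rw [hsplit]; ring
    _ ≤ C * 3 * (((k:ℝ)+1) ^ (α+1))⁻¹ := by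
      apply mul_le_mul_of_nonneg_right _ (by positivity)
      apply mul_le_mul_of_nonneg_left _ hC0
      rw [← division_def, div_le_iff₀ hk1]
      linarith
    _ = 3 * C * (((k:ℝ)+1) ^ (α+1))⁻¹ := by ring

lemma summable_dd (hα : 0 < α) (hc : 0 < c) :
    Summable (fun k : ℕ => |dd α c (k+1)|) := by
  apply Summable.of_nonneg_of_le (fun k => abs_nonneg _) _ (summable_main hα hc)
  intro k
  nlinarith [abs_nonneg (dd α c (k+1)), (by positivity : (0:ℝ) ≤ (k:ℝ))]

lemma tendsto_aa (hα : 0 < α) (hc : 0 < c) :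
    Tendsto (fun n : ℕ => aa α c n) atTop (nhds 0) := by
  have h1 : Tendsto (fun n : ℕ => c + (n:ℝ) ^ α) atTop atTop := by
    apply tendsto_atTop_add_const_left
    exact (tendsto_rpow_atTop hα).comp tendsto_natCast_atTop_atTop
  simpa [aa] using (show Tendsto (fun n : ℕ => (c + (n:ℝ) ^ α)⁻¹) atTop (nhds 0) from
    h1.inv_tendsto_atTop)

-- Complex exponential helpers
lemma hasDerivAt_expw (w : ℂ) (x : ℝ) :
    HasDerivAt (fun y : ℝ => Complex.exp (w * y)) (w * Complex.exp (w * x)) x := by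
  have h1 : HasDerivAt (fun u : ℂ => Complex.exp (w * u)) (w * Complex.exp (w * (x:ℂ))) (x:ℂ) := by
    simpa [mul_comm] using ((hasDerivAt_id (x:ℂ)).const_mul w).cexp
  exact h1.comp_ofReal

noncomputable def EE (x : ℝ) : ℂ := Complex.exp ((x:ℂ) * Complex.I)

lemma hasDerivAt_EE (x : ℝ) : HasDerivAt EE (Complex.I * EE x) x := by
  have h := hasDerivAt_expw Complex.I x
  have he : EE = fun y : ℝ => Complex.exp (Complex.I * (y:ℂ)) := by
    funext y; simp [EE, mul_comm]
  rw [he]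
  simpa [mul_comm] using h

lemma continuous_EE : Continuous EE :=
  Complex.continuous_exp.comp (Complex.continuous_ofReal.mul continuous_const)

lemma norm_EE_pow (x : ℝ) (n : ℕ) : ‖EE x ^ n‖ = 1 := by
  simp [EE, Complex.norm_exp]

noncomputable def ffun (α c : ℝ) (k : ℕ) (x : ℝ) : ℂ :=
  (dd α c (k+1) : ℂ) * Complex.exp ((((k:ℂ)+3) * Complex.I) * (x:ℂ))

noncomputable def ffun' (α c : ℝ) (k : ℕ) (x : ℝ) : ℂ :=
  (dd α c (k+1) : ℂ) * ((((k:ℂ)+3) * Complex.I) * Complex.exp ((((k:ℂ)+3) * Complex.I) * (x:ℂ)))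

lemma norm_ffun (k : ℕ) (x : ℝ) : ‖ffun α c k x‖ = |dd α c (k+1)| := by
  simp [ffun, Complex.norm_exp]

lemma norm_ffun' (k : ℕ) (x : ℝ) : ‖ffun' α c k x‖ = ((k:ℝ)+3) * |dd α c (k+1)| := by
  have h3 : ‖((k:ℂ)+3)‖ = (k:ℝ)+3 := by
    rw [show ((k:ℂ)+3) = (((k:ℝ)+3 : ℝ) : ℂ) by push_cast; ring, Complex.norm_real]
    rw [Real.norm_eq_abs, abs_of_nonneg (by positivity)]
  simp [ffun', Complex.norm_exp, norm_mul, h3, Complex.norm_real]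
  ring

lemma hasDerivAt_ffun (k : ℕ) (x : ℝ) : HasDerivAt (ffun α c k) (ffun' α c k x) x := by
  have h := (hasDerivAt_expw (w := ((k:ℂ)+3) * Complex.I) x).const_mul (dd α c (k+1) : ℂ)
  have he : ffun α c k = fun y : ℝ => (dd α c (k+1) : ℂ) * Complex.exp ((((k:ℂ)+3) * Complex.I) * (y:ℂ)) := rfl
  rw [he, show ffun' α c k x
      = (dd α c (k+1) : ℂ) * (((k:ℂ)+3) * Complex.I * Complex.exp ((((k:ℂ)+3) * Complex.I) * (x:ℂ))) from rfl]
  exact h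

lemma summable_ffun (hα : 0 < α) (hc : 0 < c) (x : ℝ) : Summable (fun k => ffun α c k x) := by
  apply Summable.of_norm
  simpa only [norm_ffun] using summable_dd hα hc

noncomputable def HH (α c : ℝ) (x : ℝ) : ℂ := ∑' k, ffun α c k x
noncomputable def HH' (α c : ℝ) (x : ℝ) : ℂ := ∑' k, ffun' α c k x

lemma hasDerivAt_HH (hα : 0 < α) (hc : 0 < c) (x : ℝ) :
    HasDerivAt (HH α c) (HH' α c x) x := by
  apply hasDerivAt_tsum (summable_main hα hc)
    (fun k y => hasDerivAt_ffun k y)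
    (fun k y => le_of_eq (norm_ffun' k y))
    (summable_ffun hα hc 0)

lemma continuous_ffun' (k : ℕ) : Continuous (ffun' α c k) := by
  apply continuous_const.mul
  apply continuous_const.mul
  exact Complex.continuous_exp.comp (continuous_const.mul Complex.continuous_ofReal)

lemma continuous_HH' (hα : 0 < α) (hc : 0 < c) : Continuous (HH' α c) := by
  exact continuous_tsum (fun k => continuous_ffun' k) (summable_main hα hc)
    (fun k y => le_of_eq (norm_ffun' k y))

lemma continuous_ffun (k : ℕ) : Continuous (ffun α c k) :=
  continuous_const.mul (Complex.continuous_exp.comp (continuous_const.mul Complex.continuous_ofReal))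

lemma continuous_HH (hα : 0 < α) (hc : 0 < c) : Continuous (HH α c) := by
  exact continuous_tsum (fun k => continuous_ffun k)
    (summable_dd hα hc) (fun k y => le_of_eq (norm_ffun k y))

-- the algebraic key identity
lemma key_identity (a : ℕ → ℂ) (z : ℂ) (N : ℕ) :
    (1 - z)^2 * ∑ n ∈ Finset.Icc 1 (N+2), a n * z^n
      = a 1 * z + (a 2 - 2 * a 1) * z^2
        + (∑ k ∈ Finset.range N, (a (k+1) - 2*a (k+2) + a (k+3)) * z^(k+3))
        + ((a (N+1) - 2 * a (N+2)) * z^(N+3) + a (N+2) * z^(N+4)) := by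
  induction N with
  | zero =>
    rw [show (0:ℕ)+2 = 1+1 from rfl, Finset.sum_Icc_succ_top (by omega),
      Finset.Icc_self, Finset.sum_singleton]
    simp only [Finset.range_zero, Finset.sum_empty]
    ring
  | succ n ih =>
    rw [show n+1+2 = (n+2)+1 from rfl, Finset.sum_Icc_succ_top (by omega),
      Finset.sum_range_succ]
    rw [mul_add, ih]
    ring

noncomputable def Nf (α c : ℝ) (x : ℝ) : ℂ :=
  (aa α c 1 : ℂ) * EE x + ((aa α c 2 : ℂ) - 2 * (aa α c 1 : ℂ)) * EE x ^ 2 + HH α c x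
noncomputable def Df (x : ℝ) : ℂ := (1 - EE x) ^ 2
noncomputable def WW (α c : ℝ) (x : ℝ) : ℂ := Nf α c x / Df x

lemma EE_ne_one {x : ℝ} (h0 : 0 < x) (h2 : x < 2 * Real.pi) : EE x ≠ 1 := by
  intro h
  rw [EE, Complex.exp_eq_one_iff] at h
  obtain ⟨n, hn⟩ := h
  have hn' : (x:ℂ) * Complex.I = ((n:ℂ) * (2*(Real.pi:ℂ))) * Complex.I := by rw [hn]; ring
  have hx : (x:ℂ) = (n:ℂ) * (2*(Real.pi:ℂ)) := mul_right_cancel₀ Complex.I_ne_zero hn'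
  have hxr : x = (n:ℝ) * (2*Real.pi) := by exact_mod_cast hx
  have hpi := Real.pi_pos
  have hn0 : (0:ℝ) < (n:ℝ) := by nlinarith
  have h1n : (1:ℝ) ≤ (n:ℝ) := by
    have : (0:ℤ) < n := by exact_mod_cast hn0
    exact_mod_cast this
  nlinarith

lemma ffun_eq_pow (x : ℝ) (k : ℕ) : ffun α c k x = (dd α c (k+1) : ℂ) * EE x ^ (k+3) := by
  rw [ffun, EE, ← Complex.exp_nat_mul]
  congr 2
  push_cast
  ring

lemma tendsto_partial (hα : 0 < α) (hc : 0 < c) {x : ℝ} (hx1 : EE x ≠ 1) :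
    Tendsto (fun N : ℕ => ∑ n ∈ Finset.Icc 1 N, (aa α c n : ℂ) * EE x ^ n) atTop
      (nhds (WW α c x)) := by
  set z := EE x with hzdef
  have hz : (1 - z) ^ 2 ≠ 0 := pow_ne_zero _ (sub_ne_zero.mpr (Ne.symm hx1))
  -- convergence of the d-series
  have hR : Tendsto
      (fun N : ℕ => ∑ k ∈ Finset.range N,
        ((aa α c (k+1) : ℂ) - 2 * (aa α c (k+2) : ℂ) + (aa α c (k+3) : ℂ)) * z ^ (k+3))
      atTop (nhds (HH α c x)) := by
    have h1 := (summable_ffun hα hc (α := α) (c := c) x).hasSum.tendsto_sum_nat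
    apply h1.congr
    intro N
    apply Finset.sum_congr rfl
    intro k _
    rw [ffun_eq_pow]
    congr 1
    rw [show dd α c (k+1) = aa α c (k+1) - 2 * aa α c (k+2) + aa α c (k+3) from rfl]
    push_cast
    ring
  -- boundary terms tend to zero
  have haa : ∀ n, 0 < aa α c n := by
    intro n
    apply inv_pos.mpr
    exact add_pos_of_pos_of_nonneg hc (Real.rpow_nonneg (Nat.cast_nonneg n) α)
  have hbnd : Tendsto
      (fun N : ℕ => ((aa α c (N+1) : ℂ) - 2 * (aa α c (N+2) : ℂ)) * z ^ (N+3)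
        + (aa α c (N+2) : ℂ) * z ^ (N+4)) atTop (nhds 0) := by
    apply squeeze_zero_norm (a := fun N => aa α c (N+1) + 3 * aa α c (N+2))
    · intro N
      have h1 : ‖z ^ (N+3)‖ = 1 := norm_EE_pow x (N+3)
      have h2 : ‖z ^ (N+4)‖ = 1 := norm_EE_pow x (N+4)
      calc ‖((aa α c (N+1) : ℂ) - 2 * (aa α c (N+2) : ℂ)) * z ^ (N+3)
            + (aa α c (N+2) : ℂ) * z ^ (N+4)‖
          ≤ ‖((aa α c (N+1) : ℂ) - 2 * (aa α c (N+2) : ℂ)) * z ^ (N+3)‖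
            + ‖(aa α c (N+2) : ℂ) * z ^ (N+4)‖ := norm_add_le _ _
        _ = ‖(aa α c (N+1) : ℂ) - 2 * (aa α c (N+2) : ℂ)‖ + ‖(aa α c (N+2) : ℂ)‖ := by
            rw [norm_mul, norm_mul, h1, h2, mul_one, mul_one]
        _ ≤ (‖(aa α c (N+1) : ℂ)‖ + 2 * ‖(aa α c (N+2) : ℂ)‖) + ‖(aa α c (N+2) : ℂ)‖ := by
            have := norm_sub_le ((aa α c (N+1) : ℂ)) (2 * (aa α c (N+2) : ℂ))
            rw [norm_mul] at this
            simp only [Complex.norm_ofNat] at this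
            linarith
        _ ≤ aa α c (N+1) + 3 * aa α c (N+2) := by
            rw [Complex.norm_real, Complex.norm_real, Real.norm_eq_abs, Real.norm_eq_abs,
              abs_of_pos (haa _), abs_of_pos (haa _)]
            linarith
    · have h1 : Tendsto (fun N : ℕ => aa α c (N+1)) atTop (nhds 0) :=
        (tendsto_aa hα hc).comp (tendsto_add_atTop_nat 1)
      have h2 : Tendsto (fun N : ℕ => aa α c (N+2)) atTop (nhds 0) :=
        (tendsto_aa hα hc).comp (tendsto_add_atTop_nat 2)
      simpa using h1.add ((h2.const_mul 3))
  -- the R sequence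
  have hRfull : Tendsto
      (fun N : ℕ => (aa α c 1 : ℂ) * z + ((aa α c 2 : ℂ) - 2 * (aa α c 1 : ℂ)) * z ^ 2
        + (∑ k ∈ Finset.range N,
            ((aa α c (k+1) : ℂ) - 2 * (aa α c (k+2) : ℂ) + (aa α c (k+3) : ℂ)) * z ^ (k+3))
        + (((aa α c (N+1) : ℂ) - 2 * (aa α c (N+2) : ℂ)) * z ^ (N+3)
            + (aa α c (N+2) : ℂ) * z ^ (N+4)))
      atTop (nhds (Nf α c x)) := by
    have := (tendsto_const_nhds (x := (aa α c 1 : ℂ) * z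
      + ((aa α c 2 : ℂ) - 2 * (aa α c 1 : ℂ)) * z ^ 2) (f := atTop (α := ℕ))).add hR |>.add hbnd
    simpa [Nf, add_zero] using this
  have hid : ∀ N : ℕ, (∑ n ∈ Finset.Icc 1 (N+2), (aa α c n : ℂ) * z ^ n)
      = ((aa α c 1 : ℂ) * z + ((aa α c 2 : ℂ) - 2 * (aa α c 1 : ℂ)) * z ^ 2
        + (∑ k ∈ Finset.range N,
            ((aa α c (k+1) : ℂ) - 2 * (aa α c (k+2) : ℂ) + (aa α c (k+3) : ℂ)) * z ^ (k+3))
        + (((aa α c (N+1) : ℂ) - 2 * (aa α c (N+2) : ℂ)) * z ^ (N+3)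
            + (aa α c (N+2) : ℂ) * z ^ (N+4))) / (1 - z) ^ 2 := by
    intro N
    rw [eq_div_iff hz, mul_comm]
    exact key_identity (fun n => (aa α c n : ℂ)) z N
  have h2 : Tendsto (fun N : ℕ => ∑ n ∈ Finset.Icc 1 (N+2), (aa α c n : ℂ) * z ^ n)
      atTop (nhds (WW α c x)) := by
    rw [show WW α c x = Nf α c x / (1 - z) ^ 2 from rfl]
    have := hRfull.div_const ((1 - z) ^ 2)
    apply this.congr
    intro N
    exact (hid N).symm
  exact (tendsto_add_atTop_iff_nat 2).mp h2

noncomputable def Nf' (α c : ℝ) (x : ℝ) : ℂ :=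
  (aa α c 1 : ℂ) * (Complex.I * EE x)
    + ((aa α c 2 : ℂ) - 2 * (aa α c 1 : ℂ)) * ((2:ℂ) * EE x ^ 1 * (Complex.I * EE x))
    + HH' α c x
noncomputable def Df' (x : ℝ) : ℂ := (2:ℂ) * (1 - EE x) ^ 1 * (-(Complex.I * EE x))
noncomputable def VV (α c : ℝ) (x : ℝ) : ℂ :=
  (Nf' α c x * Df x - Nf α c x * Df' x) / Df x ^ 2

lemma hasDerivAt_Nf (hα : 0 < α) (hc : 0 < c) (x : ℝ) :
    HasDerivAt (Nf α c) (Nf' α c x) x := by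
  have hE := hasDerivAt_EE x
  have h2 : HasDerivAt (fun y : ℝ => EE y ^ 2) ((2:ℂ) * EE x ^ 1 * (Complex.I * EE x)) x := by
    have h : HasDerivAt (fun y : ℝ => EE y * EE y) _ x := hE.mul hE
    have heq : (fun y : ℝ => EE y * EE y) = fun y : ℝ => EE y ^ 2 := by funext y; ring
    rw [heq] at h
    convert h using 1
    ring
  exact ((hE.const_mul _).add (h2.const_mul _)).add (hasDerivAt_HH hα hc x)

lemma hasDerivAt_Df (x : ℝ) : HasDerivAt Df (Df' x) x := by
  have hE := hasDerivAt_EE x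
  have h1 : HasDerivAt (fun y : ℝ => 1 - EE y) (-(Complex.I * EE x)) x := hE.const_sub 1
  have h : HasDerivAt (fun y : ℝ => (1 - EE y) * (1 - EE y)) _ x := h1.mul h1
  have heq : (fun y : ℝ => (1 - EE y) * (1 - EE y)) = Df := by
    funext y; rw [Df]; ring
  rw [heq] at h
  convert h using 1
  rw [Df']
  ring

lemma hasDerivAt_WW (hα : 0 < α) (hc : 0 < c) {x : ℝ} (hx1 : EE x ≠ 1) :
    HasDerivAt (WW α c) (VV α c x) x := by
  have hDf : Df x ≠ 0 := pow_ne_zero _ (sub_ne_zero.mpr (Ne.symm hx1))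
  exact (hasDerivAt_Nf hα hc x).div (hasDerivAt_Df x) hDf

lemma EE_pi : EE Real.pi = -1 := Complex.exp_pi_mul_I

lemma HH_pi_real : HH α c Real.pi = ((∑' k : ℕ, dd α c (k+1) * (-1:ℝ)^(k+3) : ℝ) : ℂ) := by
  rw [HH, Complex.ofReal_tsum]
  apply tsum_congr
  intro k
  rw [ffun_eq_pow, EE_pi]
  push_cast
  ring

lemma HH'_pi_imag :
    HH' α c Real.pi
      = Complex.I * ((∑' k : ℕ, dd α c (k+1) * (((k:ℝ)+3) * (-1:ℝ)^(k+3)) : ℝ) : ℂ) := by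
  rw [HH', Complex.ofReal_tsum, ← tsum_mul_left]
  apply tsum_congr
  intro k
  have hexp : Complex.exp ((((k:ℂ)+3) * Complex.I) * (Real.pi:ℂ)) = (-1:ℂ) ^ (k+3) := by
    rw [show (((k:ℂ)+3) * Complex.I) * (Real.pi:ℂ) = ((k+3 : ℕ) : ℂ) * ((Real.pi:ℂ) * Complex.I) by
      push_cast; ring, Complex.exp_nat_mul, Complex.exp_pi_mul_I]
  rw [ffun', hexp]
  push_cast
  ring

lemma VV_re_pi (hα : 0 < α) (hc : 0 < c) : (VV α c Real.pi).re = 0 := by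
  set r : ℝ := ∑' k : ℕ, dd α c (k+1) * (-1:ℝ)^(k+3) with hr
  set s : ℝ := ∑' k : ℕ, dd α c (k+1) * (((k:ℝ)+3) * (-1:ℝ)^(k+3)) with hs
  have hNf : Nf α c Real.pi = ((-(aa α c 1) + (aa α c 2 - 2 * aa α c 1) + r : ℝ) : ℂ) := by
    rw [Nf, EE_pi, HH_pi_real, ← hr]
    push_cast
    ring
  have hNf' : Nf' α c Real.pi
      = Complex.I * ((-(aa α c 1) + 2 * (aa α c 2 - 2 * aa α c 1) + s : ℝ) : ℂ) := by
    rw [Nf', EE_pi, HH'_pi_imag, ← hs]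
    push_cast
    ring
  have hDf : Df Real.pi = 4 := by rw [Df, EE_pi]; ring
  have hDf' : Df' Real.pi = 4 * Complex.I := by rw [Df', EE_pi]; ring
  set R : ℝ := -(aa α c 1) + (aa α c 2 - 2 * aa α c 1) + r
  set S : ℝ := -(aa α c 1) + 2 * (aa α c 2 - 2 * aa α c 1) + s
  have : VV α c Real.pi = Complex.I * (((S - R)/4 : ℝ) : ℂ) := by
    rw [VV, hNf, hNf', hDf, hDf']
    push_cast
    ring
  rw [this]
  simp

lemma continuousAt_VV (hα : 0 < α) (hc : 0 < c) {x : ℝ} (hx1 : EE x ≠ 1) :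
    ContinuousAt (VV α c) x := by
  have hDf : Df x ≠ 0 := pow_ne_zero _ (sub_ne_zero.mpr (Ne.symm hx1))
  have hcE : Continuous EE := continuous_EE
  have hcNf : Continuous (Nf α c) :=
    ((continuous_const.mul hcE).add (continuous_const.mul (hcE.pow 2))).add
      (continuous_HH hα hc)
  have hcNf' : Continuous (Nf' α c) := by
    apply Continuous.add
    apply Continuous.add
    · exact continuous_const.mul (continuous_const.mul hcE)
    · exact continuous_const.mul
        ((continuous_const.mul (hcE.pow 1)).mul (continuous_const.mul hcE))
    · exact continuous_HH' hα hc
  have hcDf : Continuous Df := (continuous_const.sub hcE).pow 2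
  have hcDf' : Continuous Df' :=
    (continuous_const.mul ((continuous_const.sub hcE).pow 1)).mul
      ((continuous_const.mul hcE).neg)
  apply ContinuousAt.div
  · exact ((hcNf'.mul hcDf).sub (hcNf.mul hcDf')).continuousAt
  · exact (hcDf.pow 2).continuousAt
  · exact pow_ne_zero _ hDf

end GreenAux

/-- For `α ∈ (0,2]` and `c > 0`, the derivative of the periodic Green function `G_{α,c}`
tends to `0` as `x → π⁻`. -/
theorem green_periodic_deriv_tendsto_zero
    (α c : ℝ) (hα : 0 < α) (hα2 : α ≤ 2) (hc : 0 < c) (G : ℝ → ℝ)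
    (hG : ∀ x ∈ Set.Ioo (0 : ℝ) Real.pi,
      Tendsto (fun N : ℕ =>
          (1 / (2 * Real.pi)) *
            (1 / c + 2 * ∑ n ∈ Finset.Icc 1 N, Real.cos ((n : ℝ) * x) / (c + (n : ℝ) ^ α)))
        atTop (nhds (G x)))
    (hdiff : ∀ x ∈ Set.Ioo (0 : ℝ) Real.pi, DifferentiableAt ℝ G x) :
    Tendsto (deriv G) (nhdsWithin Real.pi (Set.Iio Real.pi)) (nhds 0) := by
  classical
  have hπ := Real.pi_pos
  set FF : ℝ → ℝ := fun x => (1/(2*Real.pi)) * (1/c + 2*(GreenAux.WW α c x).re) with hFFdef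
  -- Step 1 : G = FF on Ioo 0 π
  have hGF : ∀ x ∈ Set.Ioo (0:ℝ) Real.pi, G x = FF x := by
    intro x hx
    have hx2 : x < 2*Real.pi := by linarith [hx.2]
    have hx1 : GreenAux.EE x ≠ 1 := GreenAux.EE_ne_one hx.1 hx2
    have hpart := GreenAux.tendsto_partial hα hc hx1
    have hre : Tendsto
        (fun N : ℕ => (∑ n ∈ Finset.Icc 1 N, (GreenAux.aa α c n : ℂ) * GreenAux.EE x ^ n).re)
        atTop (nhds ((GreenAux.WW α c x).re)) :=
      (Complex.continuous_re.tendsto _).comp hpart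
    have hseq_eq : ∀ N : ℕ,
        (∑ n ∈ Finset.Icc 1 N, (GreenAux.aa α c n : ℂ) * GreenAux.EE x ^ n).re
          = ∑ n ∈ Finset.Icc 1 N, Real.cos ((n:ℝ)*x)/(c + (n:ℝ)^α) := by
      intro N
      rw [Complex.re_sum]
      apply Finset.sum_congr rfl
      intro n _
      have hzn : GreenAux.EE x ^ n = Complex.exp ((((n:ℝ)*x : ℝ):ℂ) * Complex.I) := by
        rw [GreenAux.EE, ← Complex.exp_nat_mul]
        congr 1
        push_cast
        ring
      rw [hzn, Complex.re_ofReal_mul, Complex.exp_ofReal_mul_I_re, GreenAux.aa,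
        div_eq_mul_inv, mul_comm]
    have t1 : Tendsto
        (fun N : ℕ => ∑ n ∈ Finset.Icc 1 N, Real.cos ((n:ℝ)*x)/(c + (n:ℝ)^α))
        atTop (nhds ((GreenAux.WW α c x).re)) := hre.congr hseq_eq
    have t2 := ((t1.const_mul (2:ℝ)).const_add (1/c)).const_mul (1/(2*Real.pi))
    exact tendsto_nhds_unique (hG x hx) t2
  -- Step 2 : eventual formula for deriv G
  have hmem : Set.Ioo (Real.pi/2) Real.pi ∈ nhdsWithin Real.pi (Set.Iio Real.pi) :=
    Ioo_mem_nhdsLT_of_mem (by constructor <;> linarith)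
  have hev : deriv G =ᶠ[nhdsWithin Real.pi (Set.Iio Real.pi)]
      fun x => (1/(2*Real.pi)) * (2 * (GreenAux.VV α c x).re) := by
    filter_upwards [hmem] with x hx
    have hx0 : 0 < x := by linarith [hx.1]
    have hxIoo : x ∈ Set.Ioo (0:ℝ) Real.pi := ⟨hx0, hx.2⟩
    have hx2 : x < 2*Real.pi := by linarith [hx.2]
    have hx1 : GreenAux.EE x ≠ 1 := GreenAux.EE_ne_one hx0 hx2
    have heq : G =ᶠ[nhds x] FF :=
      Filter.eventuallyEq_of_mem (isOpen_Ioo.mem_nhds hxIoo) hGF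
    have hreW : HasDerivAt (fun y => (GreenAux.WW α c y).re) ((GreenAux.VV α c x).re) x :=
      Complex.reCLM.hasFDerivAt.comp_hasDerivAt x (GreenAux.hasDerivAt_WW hα hc hx1)
    have hFFderiv : HasDerivAt FF ((1/(2*Real.pi)) * (2 * (GreenAux.VV α c x).re)) x :=
      ((hreW.const_mul (2:ℝ)).const_add (1/c)).const_mul (1/(2*Real.pi))
    rw [heq.deriv_eq, hFFderiv.deriv]
  -- Step 3 : the limit of the explicit derivative
  have hlim : Tendsto (fun x => (1/(2*Real.pi)) * (2 * (GreenAux.VV α c x).re))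
      (nhdsWithin Real.pi (Set.Iio Real.pi)) (nhds 0) := by
    have hπ1 : GreenAux.EE Real.pi ≠ 1 := GreenAux.EE_ne_one hπ (by linarith)
    have hc1 : ContinuousAt (GreenAux.VV α c) Real.pi := GreenAux.continuousAt_VV hα hc hπ1
    have h0 : Tendsto (fun x => (1/(2*Real.pi)) * (2 * (GreenAux.VV α c x).re)) (nhds Real.pi)
        (nhds ((1/(2*Real.pi)) * (2 * (GreenAux.VV α c Real.pi).re))) := by
      apply Tendsto.const_mul
      apply Tendsto.const_mul
      exact (Complex.continuous_re.tendsto _).comp hc1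
    rw [GreenAux.VV_re_pi hα hc] at h0
    simpa using h0.mono_left nhdsWithin_le_nhds
  exact Filter.Tendsto.congr' hev.symm hlim
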